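/- In the free group F(a,b), the subgroups H = ⟨a, bab⁻¹, b² a b⁻²⟩ and K = ⟨b, aba⁻¹⟩ (case m = 3, n = 2, k = 1, ℓ = 0... with the theorem's formula) satisfy rank(H ∩ K) = k(n−1) + ℓ = 1. -/

import Mathlib

namespace Stmt17Aux

open FreeGroup

abbrev L := Bool × Bool

inductive SH | h0 | h1 | h2 | h3
deriving DecidableEq
inductive SK | k0 | k1
deriving DecidableEq

open SH SK

instance : Fintype SH := ⟨{h0, h1, h2, h3}, by intro x; cases x <;> simp⟩
instance : Fintype SK := ⟨{k0, k1}, by intro x; cases x <;> simp⟩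

/-- partial Stallings automaton for H = ⟨a, bab⁻¹, b²a²b⁻²⟩;
letter (x, tt) = generator x, (x, ff) = its inverse; true = a, false = b. -/
def stepH : L → SH → Option SH
  | (true, _), h0 => some h0
  | (true, _), h1 => some h1
  | (true, _), h2 => some h3
  | (true, _), h3 => some h2
  | (false, true), h0 => some h1
  | (false, true), h1 => some h2
  | (false, false), h1 => some h0
  | (false, false), h2 => some h1
  | _, _ => none

/-- partial Stallings automaton for K = ⟨b, aba⁻¹⟩. -/
def stepK : L → SK → Option SK
  | (true, true), k0 => some k1
  | (true, false), k1 => some k0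
  | (false, _), s => some s
  | _, _ => none

lemma stepH_symm : ∀ (x b : Bool) (s t : SH),
    stepH (x, b) s = some t → stepH (x, !b) t = some s := by decide

lemma stepK_symm : ∀ (x b : Bool) (s t : SK),
    stepK (x, b) s = some t → stepK (x, !b) t = some s := by decide

section Generic

variable {S : Type}

def tr (step : L → S → Option S) : List L → S → Option S
  | [], s => some s
  | x :: l, s => (step x s).bind (tr step l)

variable (step : L → S → Option S)

lemma tr_append (l₁ l₂ : List L) (s : S) :
    tr step (l₁ ++ l₂) s = (tr step l₁ s).bind (tr step l₂) := by
  induction l₁ generalizing s with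
  | nil => rfl
  | cons x t ih =>
    simp only [List.cons_append, tr]
    cases step x s with
    | none => rfl
    | some u => simp [ih]

variable (hsymm : ∀ (x b : Bool) (s t : S),
    step (x, b) s = some t → step (x, !b) t = some s)

include hsymm in
lemma tr_step_inv {l₁ l₂ : List L} (h : Red.Step l₁ l₂) :
    ∀ s t : S, tr step l₁ s = some t → tr step l₂ s = some t := by
  cases h with
  | @not p q x bb =>
    intro s t hst
    rw [tr_append] at hst ⊢
    cases hp : tr step p s with
    | none => rw [hp] at hst; simp at hst
    | some u =>
      rw [hp] at hst
      simp only [Option.bind_some, tr] at hst ⊢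
      cases hu : step (x, bb) u with
      | none => rw [hu] at hst; simp at hst
      | some v =>
        rw [hu] at hst
        simp only [Option.bind_some] at hst
        rw [hsymm x bb u v hu] at hst
        simpa using hst

include hsymm in
lemma tr_red {l₁ l₂ : List L} (h : Red l₁ l₂) :
    ∀ s t : S, tr step l₁ s = some t → tr step l₂ s = some t := by
  induction h with
  | refl => exact fun s t h => h
  | tail _ hstep ih =>
    exact fun s t h => tr_step_inv step hsymm hstep s t (ih s t h)

include hsymm in
lemma tr_invRev {l : List L} : ∀ s t : S,
    tr step l s = some t → tr step (invRev l) t = some s := by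
  induction l with
  | nil =>
    intro s t h
    have h' : some s = some t := h
    injection h' with h'
    subst h'
    rfl
  | cons x l ih =>
    rcases x with ⟨x, bb⟩
    intro s t h
    simp only [tr] at h
    cases hu : step (x, bb) s with
    | none => rw [hu] at h; simp at h
    | some u =>
      rw [hu] at h
      simp only [Option.bind_some] at h
      have h1 := ih u t h
      have h2 := hsymm x bb s u hu
      have hrw : invRev ((x, bb) :: l) = invRev l ++ [(x, !bb)] := by
        simp [invRev]
      rw [hrw, tr_append, h1]
      simp [tr, h2]

/-- the stabilizer-type subgroup attached to a symmetric partial automaton -/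
def stab (s₀ : S) : Subgroup (FreeGroup Bool) where
  carrier := { g | tr step (toWord g) s₀ = some s₀ }
  one_mem' := by
    show tr step (toWord (1 : FreeGroup Bool)) s₀ = some s₀
    rw [toWord_one]
    rfl
  mul_mem' := by
    intro g h hg hh
    have hgh : (g * h).toWord = reduce (g.toWord ++ h.toWord) := by
      rw [← mk_toWord (x := g), ← mk_toWord (x := h), mul_mk, toWord_mk,
        mk_toWord, mk_toWord]
    have h1 : tr step (g.toWord ++ h.toWord) s₀ = some s₀ := by
      rw [tr_append, hg]; simpa using hh
    have := tr_red step hsymm (reduce.red (L := g.toWord ++ h.toWord)) s₀ s₀ h1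
    simpa [Set.mem_setOf_eq, hgh] using this
  inv_mem' := by
    intro g hg
    have hrw : (g⁻¹).toWord = invRev g.toWord := toWord_inv g
    simp only [Set.mem_setOf_eq, hrw]
    exact tr_invRev step hsymm s₀ s₀ hg

end Generic

def a : FreeGroup Bool := FreeGroup.of true
def b : FreeGroup Bool := FreeGroup.of false

/-- generator of the intersection -/
def c : FreeGroup Bool := a * b * a⁻¹ * b⁻¹

/-- representative paths from the base vertex of the product core -/
def rp : SH → SK → FreeGroup Bool
  | h0, k0 => 1
  | h0, k1 => a
  | h1, k1 => a * b
  | h1, k0 => b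
  | _, _ => 1

abbrev R (x y : L) : Prop := y ≠ (x.1, !x.2)

lemma of_true_eq : FreeGroup.of true = FreeGroup.mk [(true, true)] := rfl
lemma of_false_eq : FreeGroup.of false = FreeGroup.mk [(false, true)] := rfl

lemma a_inv_eq : (a : FreeGroup Bool)⁻¹ = FreeGroup.mk [(true, false)] := by
  rw [a, of_true_eq, inv_mk]; rfl

lemma b_inv_eq : (b : FreeGroup Bool)⁻¹ = FreeGroup.mk [(false, false)] := by
  rw [b, of_false_eq, inv_mk]; rfl

lemma mk_cons (x : L) (l : List L) :
    FreeGroup.mk (x :: l) = FreeGroup.mk [x] * FreeGroup.mk l := by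
  rw [mul_mk]; rfl

lemma main (l : List L) (hc : l.Chain' R) :
    ∀ (u : SH) (v : SK),
      ((u = h0 ∧ v = k0) ∨ (u = h0 ∧ v = k1) ∨ (u = h1 ∧ v = k1) ∨ (u = h1 ∧ v = k0)) →
    tr stepH l u = some h0 → tr stepK l v = some k0 →
    rp u v * FreeGroup.mk l ∈ Subgroup.closure ({c} : Set (FreeGroup Bool)) := by
  induction l with
  | nil =>
    intro u v hok hH hK
    have hu : some u = some h0 := hH
    have hv : some v = some k0 := hK
    injection hu with hu; injection hv with hv
    subst hu; subst hv
    show rp h0 k0 * FreeGroup.mk [] ∈ _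
    have : rp h0 k0 * FreeGroup.mk [] = 1 := by
      rw [rp]; show (1 : FreeGroup Bool) * 1 = 1; simp
    rw [this]; exact one_mem _
  | cons x t ih =>
    intro u v hok hH hK
    rcases x with ⟨x, xb⟩
    have hct : t.Chain' R := hc.tail
    have hban : ∀ y ∈ t.head?, R (x, xb) y := (List.isChain_cons.1 hc).1
    have ihc := ih hct
    simp only [tr] at hH hK
    rcases hok with ⟨rfl, rfl⟩ | ⟨rfl, rfl⟩ | ⟨rfl, rfl⟩ | ⟨rfl, rfl⟩
    · -- state (h0, k0)
      cases x <;> cases xb <;>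
        simp only [stepH, stepK, Option.bind_some, Option.bind_none] at hH hK
      · -- (false,false) = b⁻¹ : stepH h0 none
        exact absurd hH (by simp)
      · -- (false,true) = b : → (h1,k0)
        have := ihc h1 k0 (by tauto) hH hK
        have heq : rp h0 k0 * (FreeGroup.mk [(false, true)] * FreeGroup.mk t)
            = rp h1 k0 * FreeGroup.mk t := by
          rw [rp, rp, ← of_false_eq, ← b]; group
        rw [mk_cons, heq]
        exact this
      · -- (true,false) = a⁻¹ : stepK k0 none
        exact absurd hK (by simp)
      · -- (true,true) = a : → (h0,k1)
        have := ihc h0 k1 (by tauto) hH hK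
        have heq : rp h0 k0 * (FreeGroup.mk [(true, true)] * FreeGroup.mk t)
            = rp h0 k1 * FreeGroup.mk t := by
          rw [rp, rp, ← of_true_eq, ← a]; group
        rw [mk_cons, heq]
        exact this
    · -- state (h0, k1)
      cases x <;> cases xb <;>
        simp only [stepH, stepK, Option.bind_some, Option.bind_none] at hH hK
      · exact absurd hH (by simp)
      · -- b : → (h1,k1)
        have := ihc h1 k1 (by tauto) hH hK
        have heq : rp h0 k1 * (FreeGroup.mk [(false, true)] * FreeGroup.mk t)
            = rp h1 k1 * FreeGroup.mk t := by
          rw [rp, rp, ← of_false_eq, ← b]; group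
        rw [mk_cons, heq]
        exact this
      · -- a⁻¹ : → (h0,k0)
        have := ihc h0 k0 (by tauto) hH hK
        have heq : rp h0 k1 * (FreeGroup.mk [(true, false)] * FreeGroup.mk t)
            = rp h0 k0 * FreeGroup.mk t := by
          rw [rp, rp, ← a_inv_eq]; group
        rw [mk_cons, heq]
        exact this
      · -- a : stepK k1 none
        exact absurd hK (by simp)
    · -- state (h1, k1)
      cases x <;> cases xb <;>
        simp only [stepH, stepK, Option.bind_some, Option.bind_none] at hH hK
      · -- b⁻¹ : → (h0,k1)
        have := ihc h0 k1 (by tauto) hH hK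
        have heq : rp h1 k1 * (FreeGroup.mk [(false, false)] * FreeGroup.mk t)
            = rp h0 k1 * FreeGroup.mk t := by
          rw [rp, rp, ← b_inv_eq]; group
        rw [mk_cons, heq]
        exact this
      · -- b : hair (h2,k1), contradiction
        exfalso
        cases t with
        | nil =>
          have : some h2 = some h0 := hH
          injection this with this
          exact SH.noConfusion this
        | cons y t' =>
          have hy : R (false, true) y := hban y rfl
          rcases y with ⟨y, yb⟩
          simp only [tr] at hH hK
          cases y <;> cases yb <;>
            simp only [stepH, stepK, Option.bind_some, Option.bind_none] at hH hK hy
          · exact hy rfl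
          · exact absurd hH (by simp)
          · -- y = (true,false)=a⁻¹ : (h2,k1) → (h3,k0)
            cases t' with
            | nil =>
              have : some h3 = some h0 := hH
              injection this with this
              exact SH.noConfusion this
            | cons z t'' =>
              have hz : R (true, false) z := (List.isChain_cons.1 hct).1 z rfl
              rcases z with ⟨z, zb⟩
              simp only [tr] at hH hK
              cases z <;> cases zb <;>
                simp only [stepH, stepK, Option.bind_some, Option.bind_none] at hH hK hz
              · exact absurd hH (by simp)
              · exact absurd hH (by simp)
              · exact absurd hK (by simp)
              · exact hz rfl
          · -- y = (true,true)=a : stepK k1 none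
            exact absurd hK (by simp)
      · -- a⁻¹ : → (h1,k0), δ = c
        have := ihc h1 k0 (by tauto) hH hK
        have hmem := mul_mem (Subgroup.subset_closure (Set.mem_singleton c)) this
        have heq : rp h1 k1 * (FreeGroup.mk [(true, false)] * FreeGroup.mk t)
            = c * (rp h1 k0 * FreeGroup.mk t) := by
          rw [rp, rp, ← a_inv_eq, c]; group
        rw [mk_cons, heq]
        exact hmem
      · -- a : stepK k1 none
        exact absurd hK (by simp)
    · -- state (h1, k0)
      cases x <;> cases xb <;>
        simp only [stepH, stepK, Option.bind_some, Option.bind_none] at hH hK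
      · -- b⁻¹ : → (h0,k0)
        have := ihc h0 k0 (by tauto) hH hK
        have heq : rp h1 k0 * (FreeGroup.mk [(false, false)] * FreeGroup.mk t)
            = rp h0 k0 * FreeGroup.mk t := by
          rw [rp, rp, ← b_inv_eq]; group
        rw [mk_cons, heq]
        exact this
      · -- b : hair (h2,k0), contradiction
        exfalso
        cases t with
        | nil =>
          have : some h2 = some h0 := hH
          injection this with this
          exact SH.noConfusion this
        | cons y t' =>
          have hy : R (false, true) y := hban y rfl
          rcases y with ⟨y, yb⟩
          simp only [tr] at hH hK
          cases y <;> cases yb <;>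
            simp only [stepH, stepK, Option.bind_some, Option.bind_none] at hH hK hy
          · exact hy rfl
          · exact absurd hH (by simp)
          · -- y = a⁻¹ : stepK k0 none
            exact absurd hK (by simp)
          · -- y = a : (h2,k0) → (h3,k1)
            cases t' with
            | nil =>
              have : some h3 = some h0 := hH
              injection this with this
              exact SH.noConfusion this
            | cons z t'' =>
              have hz : R (true, true) z := (List.isChain_cons.1 hct).1 z rfl
              rcases z with ⟨z, zb⟩
              simp only [tr] at hH hK
              cases z <;> cases zb <;>
                simp only [stepH, stepK, Option.bind_some, Option.bind_none] at hH hK hz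
              · exact absurd hH (by simp)
              · exact absurd hH (by simp)
              · exact hz rfl
              · exact absurd hK (by simp)
      · -- a⁻¹ : stepK k0 none
        exact absurd hK (by simp)
      · -- a : → (h1,k1), δ = c⁻¹
        have := ihc h1 k1 (by tauto) hH hK
        have hmem := mul_mem (inv_mem (Subgroup.subset_closure (Set.mem_singleton c))) this
        have heq : rp h1 k0 * (FreeGroup.mk [(true, true)] * FreeGroup.mk t)
            = c⁻¹ * (rp h1 k1 * FreeGroup.mk t) := by
          rw [rp, rp, ← of_true_eq, ← a, c]; group
        rw [mk_cons, heq]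
        exact hmem

/-- a reduced word has the chain property -/
lemma chain'_of_reduce_eq : ∀ (l : List L), reduce l = l → l.Chain' R := by
  intro l
  induction l with
  | nil => intro _; exact List.isChain_nil
  | cons x t ih =>
    intro h
    rcases hr : reduce t with _ | ⟨y, t'⟩
    · rw [reduce.cons, hr] at h
      have h' : [x] = x :: t := h
      have ht : t = [] := by
        injection h' with _ h2
        exact h2.symm
      subst ht
      exact List.isChain_singleton x
    · rw [reduce.cons, hr] at h
      have h' : (if x.1 = y.1 ∧ x.2 = !y.2 then t' else x :: y :: t') = x :: t := h
      clear h
      by_cases hcan : x.1 = y.1 ∧ x.2 = !y.2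
      · rw [if_pos hcan] at h'
        exfalso
        have h1 : (reduce t).length ≤ t.length := (reduce.red (L := t)).length_le
        have h2 : t'.length = (x :: t).length := by rw [h']
        rw [hr] at h1
        simp at h1 h2
        omega
      · rw [if_neg hcan] at h'
        have ht : t = y :: t' := by
          injection h' with _ h2
          exact h2.symm
        have htred : reduce t = t := by rw [hr, ht]
        have hch := ih htred
        rw [ht]
        refine List.isChain_cons_cons.2 ⟨?_, by rwa [ht] at hch⟩
        intro hxy
        rcases x with ⟨x1, x2⟩
        rcases y with ⟨y1, y2⟩
        apply hcan
        have h1 : y1 = x1 := congrArg Prod.fst hxy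
        have h2 : y2 = !x2 := congrArg Prod.snd hxy
        exact ⟨h1.symm, by rw [h2]; simp⟩

def SHgrp : Subgroup (FreeGroup Bool) := stab stepH stepH_symm h0

def SKgrp : Subgroup (FreeGroup Bool) := stab stepK stepK_symm k0

lemma mem_SHgrp (g : FreeGroup Bool) :
    g ∈ SHgrp ↔ tr stepH (toWord g) h0 = some h0 := Iff.rfl

lemma mem_SKgrp (g : FreeGroup Bool) :
    g ∈ SKgrp ↔ tr stepK (toWord g) k0 = some k0 := Iff.rfl

lemma bab_eq : b * a * b⁻¹ =
    FreeGroup.mk [(false, true), (true, true), (false, false)] := by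
  simp only [a, b, of_true_eq, of_false_eq, inv_mk, mul_mk]
  rfl

lemma b2a2b2_eq : b ^ 2 * a ^ 2 * (b ^ 2)⁻¹ =
    FreeGroup.mk [(false, true), (false, true), (true, true), (true, true),
      (false, false), (false, false)] := by
  simp only [pow_two, a, b, of_true_eq, of_false_eq, inv_mk, mul_mk]
  rfl

lemma aba_eq : a * b * a⁻¹ =
    FreeGroup.mk [(true, true), (false, true), (true, false)] := by
  simp only [a, b, of_true_eq, of_false_eq, inv_mk, mul_mk]
  rfl

lemma c_eq : c = FreeGroup.mk
    [(true, true), (false, true), (true, false), (false, false)] := by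
  simp only [c, a, b, of_true_eq, of_false_eq, inv_mk, mul_mk]
  rfl

lemma H_le_SH :
    Subgroup.closure {a, b * a * b⁻¹, b ^ 2 * a ^ 2 * (b ^ 2)⁻¹} ≤ SHgrp := by
  rw [Subgroup.closure_le]
  rintro g (rfl | rfl | rfl) <;> rw [SetLike.mem_coe, mem_SHgrp]
  · rw [a, toWord_of]; decide
  · rw [bab_eq, toWord_mk]; decide
  · rw [b2a2b2_eq, toWord_mk]; decide

lemma K_le_SK :
    Subgroup.closure {b, a * b * a⁻¹} ≤ SKgrp := by
  rw [Subgroup.closure_le]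
  rintro g (rfl | rfl) <;> rw [SetLike.mem_coe, mem_SKgrp]
  · rw [b, toWord_of]; decide
  · rw [aba_eq, toWord_mk]; decide

lemma inter_le :
    Subgroup.closure {a, b * a * b⁻¹, b ^ 2 * a ^ 2 * (b ^ 2)⁻¹} ⊓
      Subgroup.closure {b, a * b * a⁻¹} ≤
      Subgroup.closure ({c} : Set (FreeGroup Bool)) := by
  intro g hg
  have hH : tr stepH (toWord g) h0 = some h0 := (mem_SHgrp g).1 (H_le_SH hg.1)
  have hK : tr stepK (toWord g) k0 = some k0 := (mem_SKgrp g).1 (K_le_SK hg.2)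
  have hch := chain'_of_reduce_eq (toWord g) (reduce_toWord g)
  have hm := main (toWord g) hch h0 k0 (by tauto) hH hK
  have : rp h0 k0 * FreeGroup.mk (toWord g) = g := by
    rw [rp, mk_toWord]; simp
  rwa [this] at hm

lemma c_mem_inter :
    c ∈ Subgroup.closure {a, b * a * b⁻¹, b ^ 2 * a ^ 2 * (b ^ 2)⁻¹} ⊓
      Subgroup.closure {b, a * b * a⁻¹} := by
  constructor
  · have hcc : c = a * (b * a * b⁻¹)⁻¹ := by rw [c]; group
    rw [hcc]
    exact Subgroup.mul_mem _ (Subgroup.subset_closure (by simp))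
      (Subgroup.inv_mem _ (Subgroup.subset_closure (by simp)))
  · have hcc : c = (a * b * a⁻¹) * b⁻¹ := by rw [c]
    rw [hcc]
    exact Subgroup.mul_mem _ (Subgroup.subset_closure (by simp))
      (Subgroup.inv_mem _ (Subgroup.subset_closure (by simp)))

lemma inter_eq :
    Subgroup.closure {a, b * a * b⁻¹, b ^ 2 * a ^ 2 * (b ^ 2)⁻¹} ⊓
      Subgroup.closure {b, a * b * a⁻¹} =
      Subgroup.closure ({c} : Set (FreeGroup Bool)) := by
  refine le_antisymm inter_le ?_
  rw [Subgroup.closure_le]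
  rintro g rfl
  exact c_mem_inter

lemma c_ne_one : c ≠ 1 := by
  rw [c_eq]
  intro h
  have h2 := congrArg toWord h
  rw [toWord_mk, toWord_one] at h2
  exact absurd h2 (by decide)

/-- rank of the closure of a single nontrivial element is 1 -/
lemma rank_closure_singleton {G : Type*} [Group G] (g : G) (hg : g ≠ 1) :
    ∃ hI : Group.FG ↥(Subgroup.closure ({g} : Set G)),
      @Group.rank ↥(Subgroup.closure ({g} : Set G)) _ hI = 1 := by
  haveI : Finite ({g} : Set G) := (Set.finite_singleton g).to_subtype
  refine ⟨Group.closure_finite_fg _, ?_⟩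
  have hle := Subgroup.rank_closure_finite_le_nat_card ({g} : Set G)
  have hcard : Nat.card ({g} : Set G) = 1 := by simp
  rw [hcard] at hle
  have hge : Group.rank ↥(Subgroup.closure ({g} : Set G)) ≠ 0 := by
    intro h0
    obtain ⟨T, hT1, hT2⟩ := Group.rank_spec ↥(Subgroup.closure ({g} : Set G))
    rw [h0, Finset.card_eq_zero] at hT1
    subst hT1
    rw [Finset.coe_empty, Subgroup.closure_empty] at hT2
    have hgC : g ∈ Subgroup.closure ({g} : Set G) := Subgroup.subset_closure rfl
    have hb : (⟨g, hgC⟩ : ↥(Subgroup.closure ({g} : Set G))) ∈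
        (⊥ : Subgroup ↥(Subgroup.closure ({g} : Set G))) :=
      hT2.symm ▸ Subgroup.mem_top _
    rw [Subgroup.mem_bot] at hb
    apply hg
    exact congrArg Subtype.val hb
  omega

end Stmt17Aux

theorem stmt_17 :
    let a : FreeGroup Bool := FreeGroup.of true
    let b : FreeGroup Bool := FreeGroup.of false
    let H : Subgroup (FreeGroup Bool) :=
      Subgroup.closure {a, b * a * b⁻¹, b ^ 2 * a ^ 2 * (b ^ 2)⁻¹}
    let K : Subgroup (FreeGroup Bool) := Subgroup.closure {b, a * b * a⁻¹}
    ∃ hI : Group.FG ↥(H ⊓ K), @Group.rank ↥(H ⊓ K) _ hI = 1 := by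
  intro a b H K
  have heq : H ⊓ K = Subgroup.closure ({Stmt17Aux.c} : Set (FreeGroup Bool)) :=
    Stmt17Aux.inter_eq
  rw [heq]
  exact Stmt17Aux.rank_closure_singleton Stmt17Aux.c Stmt17Aux.c_ne_one
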